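/- For every real a > 1 and every x ≥ 0, the limit lim_{m→∞} m³·Λ⁶_m(x) = 15x³ holds, where Λ⁶_m(x) is the sixth central moment of the modified Szász–Mirakjan–Kantorovich operator. -/

import Mathlib

open Real MeasureTheory Filter

/-- The modified Szász–Mirakjan–Kantorovich operator of Mishra and Yadav. -/
noncomputable def szaszKant (a : ℝ) (m : ℕ) (f : ℝ → ℝ) (x : ℝ) : ℝ :=
  (m : ℝ) * ∑' k : ℕ,
    Real.exp (-(x * Real.log a / (a ^ ((1 : ℝ) / (m : ℝ)) - 1))) *
      (x * Real.log a / (a ^ ((1 : ℝ) / (m : ℝ)) - 1)) ^ k / (Nat.factorial k : ℝ) *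
      ∫ t in ((k : ℝ) / (m : ℝ))..(((k : ℝ) + 1) / (m : ℝ)), f t

/-- The `n`-th central moment of the operator. -/
noncomputable def szaszKantCM (a : ℝ) (m : ℕ) (n : ℕ) (x : ℝ) : ℝ :=
  szaszKant a m (fun t => (t - x) ^ n) x

lemma factProd : ∀ (i n : ℕ),
    (∏ j ∈ Finset.range i, ((n : ℝ) + i - j)) * (n.factorial : ℝ) = ((n + i).factorial : ℝ) := by
  intro i
  induction i with
  | zero => intro n; simp
  | succ i ih =>
    intro n
    rw [Finset.prod_range_succ]
    have h3 : ((n : ℝ) + ((i : ℕ) + 1 : ℕ) - (i : ℝ)) = ((n : ℝ) + 1) := by push_cast; ring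
    rw [h3]
    have h2 : (∏ j ∈ Finset.range i, ((n : ℝ) + ((i : ℕ) + 1 : ℕ) - j))
        = ∏ j ∈ Finset.range i, (((n + 1 : ℕ) : ℝ) + i - j) := by
      apply Finset.prod_congr rfl
      intro j _
      push_cast
      ring
    rw [h2]
    have hih := ih (n + 1)
    rw [show n + 1 + i = n + (i + 1) from by omega] at hih
    push_cast [Nat.factorial_succ] at hih ⊢
    linear_combination hih

lemma hasSum_desc (y : ℝ) (i : ℕ) :
    HasSum (fun k : ℕ => y ^ k / (k.factorial : ℝ) * ∏ j ∈ Finset.range i, ((k : ℝ) - j))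
      (y ^ i * Real.exp y) := by
  have hinj : Function.Injective (fun n : ℕ => n + i) := add_left_injective i
  have hzero : ∀ k ∉ Set.range (fun n : ℕ => n + i),
      y ^ k / (k.factorial : ℝ) * ∏ j ∈ Finset.range i, ((k : ℝ) - j) = 0 := by
    intro k hk
    have hki : k < i := by
      by_contra h
      exact hk ⟨k - i, by simp; omega⟩
    have : (∏ j ∈ Finset.range i, ((k : ℝ) - j)) = 0 :=
      Finset.prod_eq_zero (Finset.mem_range.mpr hki) (by simp)
    rw [this, mul_zero]
  rw [← hinj.hasSum_iff hzero]
  have h0 : HasSum (fun n : ℕ => y ^ i * (y ^ n / (n.factorial : ℝ))) (y ^ i * Real.exp y) := by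
    have h := NormedSpace.expSeries_div_hasSum_exp y
    rw [← Real.exp_eq_exp_ℝ] at h
    exact h.mul_left _
  refine h0.congr_fun ?_
  intro n
  have hcast : (((n + i : ℕ) : ℝ)) = (n : ℝ) + i := by push_cast; ring
  have hprod : (∏ j ∈ Finset.range i, (((n + i : ℕ) : ℝ) - j)) = ∏ j ∈ Finset.range i, ((n : ℝ) + i - j) := by
    apply Finset.prod_congr rfl; intro j _; rw [hcast]
  show y ^ (n + i) / ((n + i).factorial : ℝ) * ∏ j ∈ Finset.range i, (((n + i : ℕ) : ℝ) - j)
      = y ^ i * (y ^ n / (n.factorial : ℝ))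
  rw [hprod]
  have hfn : ((n.factorial : ℝ)) ≠ 0 := Nat.cast_ne_zero.mpr n.factorial_ne_zero
  have hfni : (((n + i).factorial : ℝ)) ≠ 0 := Nat.cast_ne_zero.mpr (n + i).factorial_ne_zero
  have hf := factProd i n
  field_simp
  rw [pow_add]
  linear_combination (y ^ n * y ^ i) * hf

lemma integ6 (c d x : ℝ) : (∫ t in c..d, (t - x) ^ 6) = ((d - x) ^ 7 - (c - x) ^ 7) / 7 := by
  rw [intervalIntegral.integral_comp_sub_right (fun t => t ^ 6) x, integral_pow]
  norm_num

/-- The polynomial appearing as exact value of `m^3 * Λ⁶`. -/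
noncomputable def szQ (x d u : ℝ) : ℝ :=
  15 * x ^ 3 + u * (70 * x ^ 2 + 150 * x ^ 2 * d + 45 * x ^ 2 * d ^ 2)
    + u ^ 2 * (17 * x + 196 * x * d + 330 * x * d ^ 2 + 140 * x * d ^ 3 + 15 * x * d ^ 4)
    + u ^ 3 * (1 / 7 + 18 * d + 129 * d ^ 2 + 200 * d ^ 3 + 100 * d ^ 4 + 18 * d ^ 5 + d ^ 6)

lemma szQ_key (a : ℝ) (ha : 1 < a) (x : ℝ) (m : ℕ) (hm : 1 ≤ m) :
    (m : ℝ) ^ 3 * szaszKantCM a m 6 x =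
      szQ x (x * Real.log a / (a ^ ((1 : ℝ) / (m : ℝ)) - 1) - m * x) (1 / m) := by
  have hm0 : (m : ℝ) ≠ 0 := Nat.cast_ne_zero.mpr (by omega)
  simp only [szaszKantCM, szaszKant]
  set y := x * Real.log a / (a ^ ((1 : ℝ) / (m : ℝ)) - 1) with hy
  set M := (m : ℝ) with hM
  have h0 := (hasSum_desc y 0).mul_left
      (1/7 - M*x + 3*(M*x)^2 - 5*(M*x)^3 + 5*(M*x)^4 - 3*(M*x)^5 + (M*x)^6)
  have h1 := (hasSum_desc y 1).mul_left
      (18 - 62*M*x + 90*(M*x)^2 - 70*(M*x)^3 + 30*(M*x)^4 - 6*(M*x)^5)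
  have h2 := (hasSum_desc y 2).mul_left
      (129 - 270*M*x + 225*(M*x)^2 - 90*(M*x)^3 + 15*(M*x)^4)
  have h3 := (hasSum_desc y 3).mul_left (200 - 260*M*x + 120*(M*x)^2 - 20*(M*x)^3)
  have h4 := (hasSum_desc y 4).mul_left (100 - 75*M*x + 15*(M*x)^2)
  have h5 := (hasSum_desc y 5).mul_left (18 - 6*M*x)
  have h6 := (hasSum_desc y 6).mul_left (1 : ℝ)
  have H := (h0.add (h1.add (h2.add (h3.add (h4.add (h5.add h6)))))).mul_left
      (Real.exp (-y) * M⁻¹ ^ 7)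
  have Heq : HasSum
      (fun k : ℕ => Real.exp (-y) * y ^ k / (k.factorial : ℝ) *
        ∫ t in ((k : ℝ) / M)..(((k : ℝ) + 1) / M), (t - x) ^ 6)
      (Real.exp (-y) * M⁻¹ ^ 7 *
        ((1/7 - M*x + 3*(M*x)^2 - 5*(M*x)^3 + 5*(M*x)^4 - 3*(M*x)^5 + (M*x)^6) * (y ^ 0 * Real.exp y) +
        ((18 - 62*M*x + 90*(M*x)^2 - 70*(M*x)^3 + 30*(M*x)^4 - 6*(M*x)^5) * (y ^ 1 * Real.exp y) +
        ((129 - 270*M*x + 225*(M*x)^2 - 90*(M*x)^3 + 15*(M*x)^4) * (y ^ 2 * Real.exp y) +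
        ((200 - 260*M*x + 120*(M*x)^2 - 20*(M*x)^3) * (y ^ 3 * Real.exp y) +
        ((100 - 75*M*x + 15*(M*x)^2) * (y ^ 4 * Real.exp y) +
        ((18 - 6*M*x) * (y ^ 5 * Real.exp y) +
        1 * (y ^ 6 * Real.exp y)))))))) := by
    refine H.congr_fun ?_
    intro k
    rw [integ6]
    have hk : ((k.factorial : ℝ)) ≠ 0 := Nat.cast_ne_zero.mpr k.factorial_ne_zero
    simp only [Finset.prod_range_succ, Finset.prod_range_zero, one_mul]
    push_cast
    field_simp
    ring
  rw [Heq.tsum_eq]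
  simp only [Real.exp_neg]
  rw [szQ]
  field_simp
  ring

lemma tendsto_exp_slope : Tendsto (fun s : ℝ => s / (Real.exp s - 1)) (nhdsWithin 0 {(0:ℝ)}ᶜ) (nhds 1) := by
  have h := Real.hasDerivAt_exp 0
  rw [hasDerivAt_iff_tendsto_slope] at h
  have h2 : Tendsto (fun s : ℝ => (Real.exp s - 1) / s) (nhdsWithin 0 {(0:ℝ)}ᶜ) (nhds 1) := by
    simpa [slope_fun_def, Real.exp_zero, div_eq_inv_mul] using h
  have h3 := h2.inv₀ one_ne_zero
  simpa [inv_div] using h3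

lemma tendsto_exp_quad :
    Tendsto (fun s : ℝ => (s + 1 - Real.exp s) / s ^ 2) (nhdsWithin 0 {(0:ℝ)}ᶜ) (nhds (-(1/2))) := by
  rw [← tendsto_sub_nhds_zero_iff]
  apply squeeze_zero_norm' (a := fun s : ℝ => 2 / 9 * |s|)
  · have hball : ∀ᶠ s : ℝ in nhdsWithin 0 {(0:ℝ)}ᶜ, |s| ≤ 1 := by
      apply Filter.Eventually.filter_mono nhdsWithin_le_nhds
      filter_upwards [Metric.ball_mem_nhds (0:ℝ) zero_lt_one] with s hs
      rw [Metric.mem_ball, Real.dist_eq, sub_zero] at hs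
      exact hs.le
    filter_upwards [hball, self_mem_nhdsWithin] with s hs1 hs0
    have hs0' : s ≠ 0 := hs0
    have hs2 : (s : ℝ) ^ 2 ≠ 0 := pow_ne_zero _ hs0'
    have hb := Real.exp_bound hs1 (by norm_num : 0 < 3)
    have hsum : (∑ i ∈ Finset.range 3, s ^ i / (i.factorial : ℝ)) = 1 + s + s ^ 2 / 2 := by
      simp [Finset.sum_range_succ]
    rw [hsum] at hb
    have hb2 : |Real.exp s - (1 + s + s ^ 2 / 2)| ≤ 2 / 9 * |s| ^ 3 := by
      calc |Real.exp s - (1 + s + s ^ 2 / 2)| ≤ |s| ^ 3 * ((3:ℕ).succ / ((3:ℕ).factorial * 3)) := hb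
        _ = 2 / 9 * |s| ^ 3 := by norm_num [Nat.factorial, mul_comm]
    have heq : (s + 1 - Real.exp s) / s ^ 2 - (-(1/2)) = -((Real.exp s - (1 + s + s ^ 2 / 2)) / s ^ 2) := by
      field_simp
      ring
    rw [Real.norm_eq_abs, heq, abs_neg, abs_div, abs_pow, sq_abs]
    rw [div_le_iff₀ (by positivity)]
    calc |Real.exp s - (1 + s + s ^ 2 / 2)| ≤ 2 / 9 * |s| ^ 3 := hb2
      _ = 2 / 9 * |s| * s ^ 2 := by rw [pow_succ, sq_abs]; ring
  · have : Tendsto (fun s : ℝ => 2 / 9 * |s|) (nhds 0) (nhds (2 / 9 * |(0:ℝ)|)) :=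
      (continuous_abs.tendsto 0).const_mul _
    simpa using this.mono_left nhdsWithin_le_nhds


theorem szaszKantCM_six_lim (a : ℝ) (ha : 1 < a) (x : ℝ) (hx : 0 ≤ x) :
    Tendsto (fun m : ℕ => (m : ℝ) ^ 3 * szaszKantCM a m 6 x) atTop (nhds (15 * x ^ 3)) := by
  have ha0 : (0:ℝ) < a := lt_trans zero_lt_one ha
  have hL : 0 < Real.log a := Real.log_pos ha
  set L := Real.log a with hLdef
  have hsm : Tendsto (fun m : ℕ => L / (m:ℝ)) atTop (nhdsWithin 0 {(0:ℝ)}ᶜ) := by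
    rw [tendsto_nhdsWithin_iff]
    refine ⟨tendsto_const_div_atTop_nhds_zero_nat L, ?_⟩
    filter_upwards [eventually_ge_atTop 1] with m hm
    have hmpos : (0:ℝ) < m := by exact_mod_cast Nat.lt_of_lt_of_le Nat.zero_lt_one hm
    exact (div_pos hL hmpos).ne'
  have hδ0 : Tendsto (fun m : ℕ => x * L *
      (((L/(m:ℝ) + 1 - Real.exp (L/(m:ℝ))) / (L/(m:ℝ))^2) *
        ((L/(m:ℝ)) / (Real.exp (L/(m:ℝ)) - 1)))) atTop (nhds (x * L * (-(1/2) * 1))) :=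
    ((tendsto_exp_quad.comp hsm).mul (tendsto_exp_slope.comp hsm)).const_mul (x * L)
  have hδ : Tendsto (fun m : ℕ => x * L / (a ^ ((1:ℝ)/(m:ℝ)) - 1) - (m:ℝ) * x) atTop
      (nhds (-(x * L) / 2)) := by
    rw [show -(x*L)/2 = x * L * (-(1/2) * 1) by ring]
    refine Tendsto.congr' ?_ hδ0
    filter_upwards [eventually_ge_atTop 1] with m hm
    have hm0 : ((m:ℕ):ℝ) ≠ 0 := Nat.cast_ne_zero.mpr (by omega)
    have hs0 : L / (m:ℝ) ≠ 0 := div_ne_zero hL.ne' hm0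
    have hrw : a ^ ((1:ℝ)/(m:ℝ)) = Real.exp (L/(m:ℝ)) := by
      rw [Real.rpow_def_of_pos ha0, mul_one_div]
    have he1 : Real.exp (L/(m:ℝ)) - 1 ≠ 0 :=
      sub_ne_zero.mpr fun h => hs0 (by
        rw [show (1:ℝ) = Real.exp 0 by simp, Real.exp_eq_exp] at h
        exact h)
    rw [hrw]
    field_simp
    ring
  have hu : Tendsto (fun m : ℕ => 1/(m:ℝ)) atTop (nhds 0) := tendsto_one_div_atTop_nhds_zero_nat
  have hc : Continuous fun p : ℝ × ℝ => szQ x p.1 p.2 := by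
    unfold szQ; fun_prop
  have hQ : Tendsto (fun m : ℕ => szQ x (x*L/(a ^ ((1:ℝ)/(m:ℝ)) - 1) - (m:ℝ)*x) (1/(m:ℝ))) atTop
      (nhds (szQ x (-(x*L)/2) 0)) :=
    (hc.tendsto _).comp (hδ.prodMk_nhds hu)
  have hval : szQ x (-(x*L)/2) 0 = 15 * x ^ 3 := by norm_num [szQ]
  rw [← hval]
  refine Tendsto.congr' ?_ hQ
  filter_upwards [eventually_ge_atTop 1] with m hm
  exact (szQ_key a ha x m hm).symm
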